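/- Any singular point (x₀, y₀) ∈ (ℂ*)² of the curve F^{a}_{g,g}(x,y) = 0, where F^{a}_{g,g}(x,y) = x + y + Σ_{j=1}^g a_j x^{1−j} y^{1−j} + x^{−g} y^{−g}, satisfies x₀ = y₀. -/

import Mathlib

/-- Any singular point `(x₀,y₀) ∈ (ℂ*)²` of the curve
`F^{a}_{g,g}(x,y) = x + y + Σ_{j=1}^g a_j x^{1−j} y^{1−j} + x^{−g} y^{−g} = 0`
satisfies `x₀ = y₀`. -/
theorem stmt5 (g : ℕ) (hg : 1 ≤ g) (a : ℕ → ℂ) (F : ℂ → ℂ → ℂ)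
    (hF : ∀ x y : ℂ, F x y =
      x + y + (∑ j ∈ Finset.Icc 1 g, a j * x ^ (1 - (j : ℤ)) * y ^ (1 - (j : ℤ))) +
        x ^ (-(g : ℤ)) * y ^ (-(g : ℤ)))
    (x₀ y₀ : ℂ) (hx₀ : x₀ ≠ 0) (hy₀ : y₀ ≠ 0)
    (hFv : F x₀ y₀ = 0)
    (hdx : deriv (fun x => F x y₀) x₀ = 0)
    (hdy : deriv (fun y => F x₀ y) y₀ = 0) :
    x₀ = y₀ := by
  -- abbreviations
  have hxz : ∀ e : ℤ, x₀ ^ (e - 1) * x₀ = x₀ ^ e := fun e => by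
    rw [← zpow_add_one₀ hx₀, sub_add_cancel]
  have hyz : ∀ e : ℤ, y₀ ^ (e - 1) * y₀ = y₀ ^ e := fun e => by
    rw [← zpow_add_one₀ hy₀, sub_add_cancel]
  -- derivative in x
  have Hx : HasDerivAt (fun x => F x y₀)
      (1 + (∑ j ∈ Finset.Icc 1 g,
          (a j * ((Int.cast (1 - (j : ℤ)) : ℂ) * x₀ ^ ((1 - (j : ℤ)) - 1))) * y₀ ^ (1 - (j : ℤ))) +
        ((Int.cast (-(g : ℤ)) : ℂ) * x₀ ^ ((-(g : ℤ)) - 1)) * y₀ ^ (-(g : ℤ))) x₀ := by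
    have hfun : (fun x => F x y₀) = fun x : ℂ =>
        x + y₀ + (∑ j ∈ Finset.Icc 1 g, a j * x ^ (1 - (j : ℤ)) * y₀ ^ (1 - (j : ℤ))) +
          x ^ (-(g : ℤ)) * y₀ ^ (-(g : ℤ)) := funext fun x => hF x y₀
    rw [hfun]
    have h1 : HasDerivAt (fun x : ℂ => x + y₀) 1 x₀ := (hasDerivAt_id x₀).add_const y₀
    have h2 : HasDerivAt
        (fun x : ℂ => ∑ j ∈ Finset.Icc 1 g, a j * x ^ (1 - (j : ℤ)) * y₀ ^ (1 - (j : ℤ)))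
        (∑ j ∈ Finset.Icc 1 g,
          (a j * ((Int.cast (1 - (j : ℤ)) : ℂ) * x₀ ^ ((1 - (j : ℤ)) - 1))) * y₀ ^ (1 - (j : ℤ))) x₀ :=
      HasDerivAt.fun_sum fun j _ =>
        ((hasDerivAt_zpow (1 - (j : ℤ)) x₀ (Or.inl hx₀)).const_mul (a j)).mul_const _
    have h3 : HasDerivAt (fun x : ℂ => x ^ (-(g : ℤ)) * y₀ ^ (-(g : ℤ)))
        (((Int.cast (-(g : ℤ)) : ℂ) * x₀ ^ ((-(g : ℤ)) - 1)) * y₀ ^ (-(g : ℤ))) x₀ :=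
      (hasDerivAt_zpow (-(g : ℤ)) x₀ (Or.inl hx₀)).mul_const _
    simpa using (h1.fun_add h2).fun_add h3
  -- derivative in y
  have Hy : HasDerivAt (fun y => F x₀ y)
      (1 + (∑ j ∈ Finset.Icc 1 g,
          (a j * x₀ ^ (1 - (j : ℤ))) * ((Int.cast (1 - (j : ℤ)) : ℂ) * y₀ ^ ((1 - (j : ℤ)) - 1))) +
        x₀ ^ (-(g : ℤ)) * ((Int.cast (-(g : ℤ)) : ℂ) * y₀ ^ ((-(g : ℤ)) - 1))) y₀ := by
    have hfun : (fun y => F x₀ y) = fun y : ℂ =>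
        x₀ + y + (∑ j ∈ Finset.Icc 1 g, a j * x₀ ^ (1 - (j : ℤ)) * y ^ (1 - (j : ℤ))) +
          x₀ ^ (-(g : ℤ)) * y ^ (-(g : ℤ)) := funext fun y => hF x₀ y
    rw [hfun]
    have h1 : HasDerivAt (fun y : ℂ => x₀ + y) 1 y₀ := (hasDerivAt_id y₀).const_add x₀
    have h2 : HasDerivAt
        (fun y : ℂ => ∑ j ∈ Finset.Icc 1 g, a j * x₀ ^ (1 - (j : ℤ)) * y ^ (1 - (j : ℤ)))
        (∑ j ∈ Finset.Icc 1 g,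
          (a j * x₀ ^ (1 - (j : ℤ))) * ((Int.cast (1 - (j : ℤ)) : ℂ) * y₀ ^ ((1 - (j : ℤ)) - 1))) y₀ :=
      HasDerivAt.fun_sum fun j _ =>
        (hasDerivAt_zpow (1 - (j : ℤ)) y₀ (Or.inl hy₀)).const_mul _
    have h3 : HasDerivAt (fun y : ℂ => x₀ ^ (-(g : ℤ)) * y ^ (-(g : ℤ)))
        (x₀ ^ (-(g : ℤ)) * ((Int.cast (-(g : ℤ)) : ℂ) * y₀ ^ ((-(g : ℤ)) - 1))) y₀ :=
      (hasDerivAt_zpow (-(g : ℤ)) y₀ (Or.inl hy₀)).const_mul _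
    simpa using (h1.fun_add h2).fun_add h3
  have hdx' := Hx.deriv.symm.trans hdx
  have hdy' := Hy.deriv.symm.trans hdy
  -- multiply by x₀, y₀ respectively
  have ex : x₀ + (∑ j ∈ Finset.Icc 1 g,
      a j * (Int.cast (1 - (j : ℤ)) : ℂ) * x₀ ^ (1 - (j : ℤ)) * y₀ ^ (1 - (j : ℤ))) +
      (Int.cast (-(g : ℤ)) : ℂ) * x₀ ^ (-(g : ℤ)) * y₀ ^ (-(g : ℤ)) = 0 := by
    have := congrArg (fun t => x₀ * t) hdx'
    simp only [mul_zero] at this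
    rw [← this, mul_add, mul_add, mul_one, Finset.mul_sum]
    congr 1
    · congr 1
      refine Finset.sum_congr rfl fun j _ => ?_
      rw [← hxz (1 - (j : ℤ))]; ring
    · rw [← hxz (-(g : ℤ))]; ring
  have ey : y₀ + (∑ j ∈ Finset.Icc 1 g,
      a j * (Int.cast (1 - (j : ℤ)) : ℂ) * x₀ ^ (1 - (j : ℤ)) * y₀ ^ (1 - (j : ℤ))) +
      (Int.cast (-(g : ℤ)) : ℂ) * x₀ ^ (-(g : ℤ)) * y₀ ^ (-(g : ℤ)) = 0 := by
    have := congrArg (fun t => y₀ * t) hdy'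
    simp only [mul_zero] at this
    rw [← this, mul_add, mul_add, mul_one, Finset.mul_sum]
    congr 1
    · congr 1
      refine Finset.sum_congr rfl fun j _ => ?_
      rw [← hyz (1 - (j : ℤ))]; ring
    · rw [← hyz (-(g : ℤ))]; ring
  have h := ex.trans ey.symm
  exact add_right_cancel (add_right_cancel h)
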